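/- If W : ℝ^{d×d} → [0,∞] is continuous, finite and C² in a neighborhood of the identity, satisfies W(I) = 0, and satisfies the coercivity bound W(F) ≥ C̄ · dist²(F, SO(d)) for all F, then for every matrix F one has (1/2)·Fᵀ D²W(I) F ≥ C̄ |sym F|², where sym F = (F + Fᵀ)/2 and D²W(I) denotes the second derivative of W at the identity viewed as a quadratic form on ℝ^{d×d}. -/

import Mathlib

open Matrix Filter Topology

set_option maxHeartbeats 1000000

attribute [local instance] Matrix.frobeniusNormedAddCommGroup Matrix.frobeniusNormedSpace

/-- If `W ≥ 0` is continuous, `C²` near the identity, `W(I) = 0`, `DW(I) = 0`, and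
`W(F) ≥ C̄ dist²(F, SO(d))`, then `(1/2) Fᵀ D²W(I) F ≥ C̄ |sym F|²` for all `F`. -/
theorem stmt_4 {d : ℕ} (hd : 2 ≤ d) (W : Matrix (Fin d) (Fin d) ℝ → ℝ) (Cbar : ℝ)
    (hC : 0 < Cbar) (hWcont : Continuous W) (hWnn : ∀ F, 0 ≤ W F)
    (hW2 : ContDiffAt ℝ 2 W 1) (hWI : W 1 = 0) (hDWI : fderiv ℝ W 1 = 0)
    (hcoer : ∀ F : Matrix (Fin d) (Fin d) ℝ,
      Cbar * (Metric.infDist F {R : Matrix (Fin d) (Fin d) ℝ | Rᵀ * R = 1 ∧ R.det = 1}) ^ 2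
        ≤ W F) :
    ∀ F : Matrix (Fin d) (Fin d) ℝ,
      Cbar * ‖(1 / 2 : ℝ) • (F + Fᵀ)‖ ^ 2
        ≤ (1 / 2 : ℝ) * iteratedFDeriv ℝ 2 W 1 ![F, F] := by
  intro F
  classical
  set S : Set (Matrix (Fin d) (Fin d) ℝ) := {R | Rᵀ * R = 1 ∧ R.det = 1} with hSdef
  have hone : (1 : Matrix (Fin d) (Fin d) ℝ) ∈ S := by constructor <;> simp
  have hSne : S.Nonempty := ⟨1, hone⟩
  set s : Matrix (Fin d) (Fin d) ℝ := (1 / 2 : ℝ) • (F + Fᵀ) with hsdef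
  set Q : ℝ := iteratedFDeriv ℝ 2 W 1 ![F, F] with hQdef
  set ℓ : ℝ → Matrix (Fin d) (Fin d) ℝ := fun t => 1 + t • F with hℓdef
  have hℓ0 : ℓ 0 = 1 := by simp [hℓdef]
  have hℓd : ∀ t, HasDerivAt ℓ F t := fun t => by
    have := ((hasDerivAt_id t).smul_const F).const_add (1 : Matrix (Fin d) (Fin d) ℝ)
    rw [one_smul] at this
    exact this
  have hℓcont : Continuous ℓ := by continuity
  have hℓtend : Tendsto ℓ (𝓝 0) (𝓝 1) := by
    have h1 : ContinuousAt ℓ 0 := hℓcont.continuousAt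
    unfold ContinuousAt at h1; rwa [hℓ0] at h1
  set h : ℝ → ℝ := fun t => W (ℓ t) with hhdef
  set G := fderiv ℝ W with hGdef
  have hGc1 := hW2.fderiv_right (m := 1) (by norm_num)
  have hGd : DifferentiableAt ℝ G 1 := hGc1.differentiableAt one_ne_zero
  have hWev : ∀ᶠ y in 𝓝 (1 : Matrix (Fin d) (Fin d) ℝ), DifferentiableAt ℝ W y :=
    (hW2.eventually (by simp)).mono fun y hy => hy.differentiableAt (by norm_num)
  have hhd : ∀ᶠ t in 𝓝 (0 : ℝ), HasDerivAt h (G (ℓ t) F) t := by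
    filter_upwards [hℓtend.eventually hWev] with t ht
    exact ht.hasFDerivAt.comp_hasDerivAt t (hℓd t)
  have hG'0 : HasDerivAt (fun t => G (ℓ t)) (fderiv ℝ G 1 F) 0 := by
    have hGd' : HasFDerivAt G (fderiv ℝ G 1) (ℓ 0) := hℓ0 ▸ hGd.hasFDerivAt
    letI i1 : NormedAddCommGroup (Matrix (Fin d) (Fin d) ℝ →L[ℝ] ℝ) :=
      ContinuousLinearMap.toNormedAddCommGroup
    letI i2 : NormedSpace ℝ (Matrix (Fin d) (Fin d) ℝ →L[ℝ] ℝ) := ContinuousLinearMap.toNormedSpace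
    exact hGd'.comp_hasDerivAt 0 (hℓd 0)
  have hh'0 : HasDerivAt (fun t => G (ℓ t) F) Q 0 := by
    have := hG'0.clm_apply (hasDerivAt_const 0 F)
    rw [hℓ0, hDWI] at this
    refine this.congr_deriv ?_
    simp only [hQdef, hGdef, iteratedFDeriv_two_apply, Matrix.cons_val_zero, Matrix.cons_val_one]
    exact add_zero _
  have hh'00 : G (ℓ 0) F = 0 := by rw [hℓ0, hDWI]; simp
  have hmono : 𝓝[>] (0:ℝ) ≤ 𝓝 0 := nhdsWithin_le_nhds
  have hslope : Tendsto (fun t => G (ℓ t) F / t) (𝓝[>] (0:ℝ)) (𝓝 Q) := by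
    have h1 := hasDerivAt_iff_tendsto_slope.mp hh'0
    have h2 : Tendsto (slope (fun t => G (ℓ t) F) 0) (𝓝[>] (0:ℝ)) (𝓝 Q) :=
      h1.mono_left (nhdsWithin_mono 0 fun x hx => ne_of_gt hx)
    refine h2.congr fun t => ?_
    simp [slope_def_field, hh'00]
  have hdiv : Tendsto (fun t => G (ℓ t) F / (2 * t)) (𝓝[>] (0:ℝ)) (𝓝 (Q / 2)) := by
    refine (hslope.div_const 2).congr fun t => ?_
    rw [div_div, mul_comm]
  have htendh : Tendsto h (𝓝[>] (0:ℝ)) (𝓝 0) := by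
    have h1 : Tendsto h (𝓝 0) (𝓝 (h 0)) := (hWcont.comp hℓcont).continuousAt
    rw [show h 0 = 0 by simp [hhdef, hℓ0, hWI]] at h1
    exact h1.mono_left hmono
  have htendg : Tendsto (fun t : ℝ => t ^ 2) (𝓝[>] (0:ℝ)) (𝓝 0) := by
    have h1 : Tendsto (fun t : ℝ => t ^ 2) (𝓝 0) (𝓝 ((0:ℝ) ^ 2)) :=
      (continuous_pow 2).continuousAt
    simpa using h1.mono_left hmono
  have hmain : Tendsto (fun t => h t / t ^ 2) (𝓝[>] (0:ℝ)) (𝓝 (Q / 2)) := by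
    refine HasDerivAt.lhopital_zero_nhdsGT (f' := fun t => G (ℓ t) F)
      (g' := fun t => 2 * t) (hhd.filter_mono hmono) ?_ ?_ htendh htendg hdiv
    · exact Eventually.of_forall fun t => by simpa using hasDerivAt_pow 2 t
    · filter_upwards [self_mem_nhdsWithin] with t ht
      have ht' : (0:ℝ) < t := ht
      positivity
  -- lower bound
  have hlow : ∀ t : ℝ, 0 < t →
      Cbar * ‖s‖ ^ 2 - 4 * Cbar * ‖s‖ * ‖F‖ ^ 2 * t ≤ h t / t ^ 2 := by
    intro t ht
    set δ := Metric.infDist (ℓ t) S with hδdef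
    have hδ0 : 0 ≤ δ := Metric.infDist_nonneg
    have hℓt1 : ‖ℓ t - 1‖ = t * ‖F‖ := by
      rw [show ℓ t - 1 = t • F by simp [hℓdef], norm_smul]
      simp [abs_of_pos ht]
    have hδle : δ ≤ t * ‖F‖ := by
      calc δ ≤ dist (ℓ t) 1 := Metric.infDist_le_dist_of_mem hone
        _ = t * ‖F‖ := by rw [dist_eq_norm, hℓt1]
    have hkey : ∀ R ∈ S, t * ‖s‖ ≤ dist (ℓ t) R
        + (1/2) * (dist (ℓ t) R + t * ‖F‖) ^ 2 := by
      intro R hR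
      obtain ⟨hR1, _⟩ := hR
      set A := ℓ t - R with hAdef
      have hAd : dist (ℓ t) R = ‖A‖ := dist_eq_norm _ _
      have hA0 : 0 ≤ ‖A‖ := norm_nonneg _
      have hid : (t : ℝ) • s = (1/2 : ℝ) • (A + Aᵀ) - (1/2 : ℝ) • ((R - 1)ᵀ * (R - 1)) := by
        have hexp : (R - 1)ᵀ * (R - 1) = Rᵀ * R - Rᵀ - R + 1 := by
          simp only [transpose_sub, transpose_one, sub_mul, mul_sub, mul_one, one_mul]
          abel
        rw [hexp, hR1, hAdef, hℓdef, hsdef]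
        simp only [transpose_sub, transpose_add, transpose_smul, transpose_one]
        module
      have h1 : ‖(1/2 : ℝ) • (A + Aᵀ)‖ ≤ ‖A‖ := by
        calc ‖(1/2 : ℝ) • (A + Aᵀ)‖ = (1/2) * ‖A + Aᵀ‖ := by
              rw [norm_smul]; norm_num
          _ ≤ (1/2) * (‖A‖ + ‖Aᵀ‖) := by
              have := norm_add_le A Aᵀ; linarith
          _ = ‖A‖ := by rw [Matrix.frobenius_norm_transpose]; ring
      have hR1n : ‖R - 1‖ ≤ ‖A‖ + t * ‖F‖ := by
        calc ‖R - 1‖ = ‖(ℓ t - 1) - A‖ := by rw [hAdef]; congr 1; abel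
          _ ≤ ‖ℓ t - 1‖ + ‖A‖ := norm_sub_le _ _
          _ = ‖A‖ + t * ‖F‖ := by rw [hℓt1]; ring
      have h2 : ‖(1/2 : ℝ) • ((R - 1)ᵀ * (R - 1))‖ ≤ (1/2) * (‖A‖ + t * ‖F‖) ^ 2 := by
        rw [norm_smul]
        have hmul : ‖(R - 1)ᵀ * (R - 1)‖ ≤ ‖R - 1‖ * ‖R - 1‖ := by
          have := Matrix.frobenius_norm_mul (R - 1)ᵀ (R - 1)
          rwa [Matrix.frobenius_norm_transpose] at this
        have hRn0 : 0 ≤ ‖R - 1‖ := norm_nonneg _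
        have hsq : ‖R - 1‖ * ‖R - 1‖ ≤ (‖A‖ + t * ‖F‖) ^ 2 := by nlinarith
        have hhalf : ‖(1/2 : ℝ)‖ = 1/2 := by
          rw [Real.norm_eq_abs]; norm_num
        rw [hhalf]
        linarith
      have hts := norm_smul (t : ℝ) s
      rw [Real.norm_eq_abs, abs_of_pos ht] at hts
      calc t * ‖s‖ = ‖(t : ℝ) • s‖ := hts.symm
        _ = ‖(1/2 : ℝ) • (A + Aᵀ) - (1/2 : ℝ) • ((R - 1)ᵀ * (R - 1))‖ := by rw [hid]
        _ ≤ ‖(1/2 : ℝ) • (A + Aᵀ)‖ + ‖(1/2 : ℝ) • ((R - 1)ᵀ * (R - 1))‖ := norm_sub_le _ _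
        _ ≤ ‖A‖ + (1/2) * (‖A‖ + t * ‖F‖) ^ 2 := by linarith
        _ = dist (ℓ t) R + (1/2) * (dist (ℓ t) R + t * ‖F‖) ^ 2 := by rw [hAd]
    have hinf : t * ‖s‖ ≤ δ + (1/2) * (δ + t * ‖F‖) ^ 2 := by
      by_contra hcon
      push_neg at hcon
      have hψc : ContinuousAt (fun x : ℝ => x + (1/2) * (x + t * ‖F‖) ^ 2) δ := by
        fun_prop
      have hev2 : ∀ᶠ x in 𝓝 δ, x + (1/2) * (x + t * ‖F‖) ^ 2 < t * ‖s‖ :=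
        hψc.eventually_lt_const hcon
      obtain ⟨ε, hε, hball⟩ := Metric.eventually_nhds_iff.mp hev2
      obtain ⟨R, hRS, hRd⟩ := (Metric.infDist_lt_iff hSne).mp
        (show δ < δ + ε / 2 by linarith)
      have hRdge : δ ≤ dist (ℓ t) R := Metric.infDist_le_dist_of_mem hRS
      have hin : dist (dist (ℓ t) R) δ < ε := by
        rw [Real.dist_eq, abs_of_nonneg (by linarith)]
        linarith
      exact absurd (hkey R hRS) (not_le.mpr (hball hin))
    have h2 : t * ‖s‖ ≤ δ + 2 * t ^ 2 * ‖F‖ ^ 2 := by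
      nlinarith [norm_nonneg F, mul_nonneg ht.le (norm_nonneg F)]
    have hδsq : t ^ 2 * ‖s‖ ^ 2 - 4 * t ^ 3 * ‖s‖ * ‖F‖ ^ 2 ≤ δ ^ 2 := by
      have ha : 0 ≤ t * ‖s‖ := mul_nonneg ht.le (norm_nonneg s)
      have hb : 0 ≤ 2 * t ^ 2 * ‖F‖ ^ 2 := by positivity
      rcases le_or_gt (2 * t ^ 2 * ‖F‖ ^ 2) (t * ‖s‖) with hcase | hcase
      · nlinarith
      · nlinarith
    rw [le_div_iff₀ (by positivity : (0:ℝ) < t ^ 2)]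
    have hc1 : Cbar * δ ^ 2 ≤ h t := hcoer (ℓ t)
    nlinarith [mul_le_mul_of_nonneg_left hδsq hC.le]
  have htendf : Tendsto (fun t : ℝ => Cbar * ‖s‖ ^ 2 - 4 * Cbar * ‖s‖ * ‖F‖ ^ 2 * t)
      (𝓝[>] (0:ℝ)) (𝓝 (Cbar * ‖s‖ ^ 2)) := by
    have h1 : Continuous fun t : ℝ => Cbar * ‖s‖ ^ 2 - 4 * Cbar * ‖s‖ * ‖F‖ ^ 2 * t := by
      continuity
    have := h1.continuousAt (x := (0:ℝ))
    simp only [ContinuousAt, mul_zero, sub_zero] at this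
    exact this.mono_left hmono
  have hfinal : Cbar * ‖s‖ ^ 2 ≤ Q / 2 := by
    refine le_of_tendsto_of_tendsto htendf hmain ?_
    filter_upwards [self_mem_nhdsWithin] with t ht
    exact hlow t ht
  linarith
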